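/- Let D be a digraph. Then there exists a total order ≺ on V(D) such that every vertex v has degree at most ⌊deg_D(v)/2⌋ in the backedge graph D[≺], where deg_D(v) is the total degree (in-degree plus out-degree) of v in D. -/

import Mathlib

open Set

variable {V : Type*}

/-- A directed cycle within a set `S` under arc relation `A`. -/
def DiCycleIn (A : V → V → Prop) (S : Set V) : Prop :=
  ∃ (n : ℕ) (f : Fin (n + 1) → V), Function.Injective f ∧ (∀ i, f i ∈ S) ∧
    ∀ i, A (f i) (f (i + 1))

/-- `S` induces an acyclic subdigraph of the digraph with arc relation `A`. -/
def AcyclicSet (A : V → V → Prop) (S : Set V) : Prop := ¬ DiCycleIn A S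

/-- A `k`-dicolouring: every colour class is acyclic. -/
def Dicolourable (A : V → V → Prop) (k : ℕ) : Prop :=
  ∃ φ : V → Fin k, ∀ c, AcyclicSet A {v | φ v = c}

/-- Dichromatic number of a digraph. -/
noncomputable def dichrNum (A : V → V → Prop) : ℕ := sInf {k | Dicolourable A k}

/-- Chromatic number of a simple graph, as a natural number. -/
noncomputable def chrNum (G : SimpleGraph V) : ℕ := sInf {k | G.Colorable k}

/-- `A` is an orientation of the simple graph `G`. -/
def IsOrientation (G : SimpleGraph V) (A : V → V → Prop) : Prop :=
  (∀ u v, G.Adj u v ↔ A u v ∨ A v u) ∧ ∀ u v, A u v → ¬ A v u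

/-- The maximum dichromatic number over all orientations of `G`. -/
noncomputable def maxDichr (G : SimpleGraph V) : ℕ :=
  sSup {k | ∃ A : V → V → Prop, IsOrientation G A ∧ dichrNum A = k}

/-- The backedge graph of a digraph `A` with respect to a total order `L`. -/
def backedge (A : V → V → Prop) (L : LinearOrder V) : SimpleGraph V where
  Adj u v := (A v u ∧ L.lt u v) ∨ (A u v ∧ L.lt v u)
  symm := ⟨by intro u v h; tauto⟩
  loopless := ⟨by
    intro u h
    rcases h with ⟨_, h⟩ | ⟨_, h⟩ <;> exact @lt_irrefl V L.toPreorder u h⟩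

/-- An oriented graph: no pair of opposite arcs (hence no loops). -/
def Oriented (A : V → V → Prop) : Prop := ∀ u v, A u v → ¬ A v u

/-- The underlying graph of the digraph `A` is triangle-free. -/
def TriangleFreeDi (A : V → V → Prop) : Prop :=
  ∀ a b c : V, (A a b ∨ A b a) → (A b c ∨ A c b) → (A a c ∨ A c a) → False

/-- A directed linear forest: in- and out-degrees at most one, and no directed cycle. -/
def IsDilinForest (B : V → V → Prop) : Prop :=
  (∀ u v w, B u v → B u w → v = w) ∧ (∀ u v w, B u w → B v w → u = v) ∧
    AcyclicSet B Set.univ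

/-- The number of arcs of a digraph. -/
noncomputable def arcCount (B : V → V → Prop) : ℕ := Set.ncard {p : V × V | B p.1 p.2}

/-- The maximum number of arcs of a directed linear forest subdigraph of `A`. -/
noncomputable def linArcs (A : V → V → Prop) : ℕ :=
  sSup {m | ∃ B : V → V → Prop, (∀ u v, B u v → A u v) ∧ IsDilinForest B ∧ arcCount B = m}

/-- Independence number of a simple graph. -/
noncomputable def indepNum (G : SimpleGraph V) : ℕ :=
  sSup {k | ∃ S : Set V, (∀ u ∈ S, ∀ v ∈ S, ¬ G.Adj u v) ∧ S.ncard = k}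

/-- The `n`-backward-blowup of a digraph `A`. -/
def backBlowup (A : V → V → Prop) (n : ℕ) : V × Fin n → V × Fin n → Prop :=
  fun p q => (A p.1 q.1 ∧ p.2 = q.2) ∨ (A q.1 p.1 ∧ p.2 ≠ q.2)

/-- Number of back-arcs of `A` with respect to a rank function `f`. -/
noncomputable def bcountAux (A : V → V → Prop) (f : V → ℚ) : ℕ :=
  Set.ncard {p : V × V | A p.1 p.2 ∧ f p.2 < f p.1}

lemma bcountAux_split [Finite V] (A : V → V → Prop) (f : V → ℚ) (v : V) :
    bcountAux A f =
      Set.ncard {p : V × V | (A p.1 p.2 ∧ f p.2 < f p.1) ∧ p.1 ≠ v ∧ p.2 ≠ v} +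
        (Set.ncard {u | A v u ∧ f u < f v} + Set.ncard {u | A u v ∧ f v < f u}) := by
  classical
  have h2 : {p : V × V | (A p.1 p.2 ∧ f p.2 < f p.1) ∧ p.1 = v} =
      (fun u => (v, u)) '' {u | A v u ∧ f u < f v} := by
    ext ⟨a, b⟩
    simp only [Set.mem_setOf_eq, Set.mem_image, Prod.mk.injEq]
    constructor
    · rintro ⟨⟨ha1, ha2⟩, rfl⟩; exact ⟨b, ⟨ha1, ha2⟩, rfl, rfl⟩
    · rintro ⟨u, ⟨ha1, ha2⟩, rfl, rfl⟩; exact ⟨⟨ha1, ha2⟩, rfl⟩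
  have h3 : {p : V × V | (A p.1 p.2 ∧ f p.2 < f p.1) ∧ p.1 ≠ v ∧ p.2 = v} =
      (fun u => (u, v)) '' {u | A u v ∧ f v < f u} := by
    ext ⟨a, b⟩
    simp only [Set.mem_setOf_eq, Set.mem_image, Prod.mk.injEq]
    constructor
    · rintro ⟨⟨ha1, ha2⟩, _, rfl⟩; exact ⟨a, ⟨ha1, ha2⟩, rfl, rfl⟩
    · rintro ⟨u, ⟨ha1, ha2⟩, rfl, rfl⟩
      exact ⟨⟨ha1, ha2⟩, fun hv => absurd ha2 (by rw [hv]; exact lt_irrefl _), rfl⟩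
  have hunion : {p : V × V | A p.1 p.2 ∧ f p.2 < f p.1} =
      {p : V × V | (A p.1 p.2 ∧ f p.2 < f p.1) ∧ p.1 ≠ v ∧ p.2 ≠ v} ∪
        ({p : V × V | (A p.1 p.2 ∧ f p.2 < f p.1) ∧ p.1 = v} ∪
          {p : V × V | (A p.1 p.2 ∧ f p.2 < f p.1) ∧ p.1 ≠ v ∧ p.2 = v}) := by
    ext ⟨a, b⟩
    simp only [Set.mem_setOf_eq, Set.mem_union]
    constructor
    · intro h
      by_cases ha : a = v
      · exact Or.inr (Or.inl ⟨h, ha⟩)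
      · by_cases hb : b = v
        · exact Or.inr (Or.inr ⟨h, ha, hb⟩)
        · exact Or.inl ⟨h, ha, hb⟩
    · rintro (⟨h, _⟩ | ⟨h, _⟩ | ⟨h, _⟩) <;> exact h
  have hinjv : Function.Injective (fun u : V => (v, u)) := fun a b h => by
    simpa using h
  have hinjv' : Function.Injective (fun u : V => (u, v)) := fun a b h => by
    simpa using h
  have d1 : Disjoint {p : V × V | (A p.1 p.2 ∧ f p.2 < f p.1) ∧ p.1 = v}
      {p : V × V | (A p.1 p.2 ∧ f p.2 < f p.1) ∧ p.1 ≠ v ∧ p.2 = v} := by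
    rw [Set.disjoint_left]; rintro ⟨a, b⟩ ⟨_, rfl⟩ ⟨_, h, _⟩; exact h rfl
  have d2 : Disjoint {p : V × V | (A p.1 p.2 ∧ f p.2 < f p.1) ∧ p.1 ≠ v ∧ p.2 ≠ v}
      ({p : V × V | (A p.1 p.2 ∧ f p.2 < f p.1) ∧ p.1 = v} ∪
        {p : V × V | (A p.1 p.2 ∧ f p.2 < f p.1) ∧ p.1 ≠ v ∧ p.2 = v}) := by
    rw [Set.disjoint_left]
    rintro ⟨a, b⟩ ⟨_, ha, hb⟩ (⟨_, h⟩ | ⟨_, _, h⟩)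
    · exact ha h
    · exact hb h
  rw [bcountAux, hunion, Set.ncard_union_eq d2 (Set.toFinite _) (Set.toFinite _),
    Set.ncard_union_eq d1 (Set.toFinite _) (Set.toFinite _), h2, h3,
    Set.ncard_image_of_injective _ hinjv, Set.ncard_image_of_injective _ hinjv']
/-- There is a total order halving all degrees in the backedge graph. -/
theorem stmt_2 [Fintype V] (A : V → V → Prop) :
    ∃ L : LinearOrder V, ∀ v : V,
      ((backedge A L).neighborSet v).ncard ≤
        (Set.ncard {u | A u v} + Set.ncard {u | A v u}) / 2 := by
  classical
  obtain ⟨f₀, hf₀⟩ : ∃ f : V → ℚ, Function.Injective f :=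
    ⟨fun v => ((Fintype.equivFin V v : ℕ) : ℚ), fun a b h =>
      (Fintype.equivFin V).injective (Fin.val_injective (Nat.cast_injective h))⟩
  set S : Set ℕ := {n | ∃ f : V → ℚ, Function.Injective f ∧ bcountAux A f = n} with hS
  have hSne : S.Nonempty := ⟨_, f₀, hf₀, rfl⟩
  obtain ⟨f, hfinj, hfmin⟩ : ∃ f, Function.Injective f ∧ bcountAux A f = sInf S :=
    Nat.sInf_mem hSne
  refine ⟨LinearOrder.lift' f hfinj, fun v => ?_⟩
  haveI : Nonempty V := ⟨v⟩
  have hlt : ∀ a b : V, (LinearOrder.lift' f hfinj).lt a b ↔ f a < f b := fun a b => Iff.rfl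
  -- the neighbor set of `v` in the backedge graph
  have hnb : (backedge A (LinearOrder.lift' f hfinj)).neighborSet v =
      {u | A u v ∧ f v < f u} ∪ {u | A v u ∧ f u < f v} := by
    ext u
    simp only [SimpleGraph.mem_neighborSet, backedge, Set.mem_union, Set.mem_setOf_eq, hlt]
  -- generic fact: changing f only at v doesn't change the off-v part
  have hs1 : ∀ g : V → ℚ, (∀ u, u ≠ v → g u = f u) →
      {p : V × V | (A p.1 p.2 ∧ g p.2 < g p.1) ∧ p.1 ≠ v ∧ p.2 ≠ v} =
        {p : V × V | (A p.1 p.2 ∧ f p.2 < f p.1) ∧ p.1 ≠ v ∧ p.2 ≠ v} := by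
    intro g hg; ext ⟨a, b⟩
    simp only [Set.mem_setOf_eq]
    constructor
    · rintro ⟨⟨h1, h2⟩, ha, hb⟩; rw [hg a ha, hg b hb] at h2; exact ⟨⟨h1, h2⟩, ha, hb⟩
    · rintro ⟨⟨h1, h2⟩, ha, hb⟩; rw [← hg a ha, ← hg b hb] at h2; exact ⟨⟨h1, h2⟩, ha, hb⟩
  set n1 : ℕ :=
    Set.ncard {p : V × V | (A p.1 p.2 ∧ f p.2 < f p.1) ∧ p.1 ≠ v ∧ p.2 ≠ v} with hn1
  -- move v to the bottom
  set c_lo : ℚ := (Finset.univ.inf' Finset.univ_nonempty f) - 1 with hclo_def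
  have hclo : ∀ u, c_lo < f u := fun u => by
    have := Finset.inf'_le f (Finset.mem_univ u); rw [hclo_def]; linarith
  have hlo_inj : Function.Injective (Function.update f v c_lo) := by
    intro a b hab
    by_cases ha : a = v <;> by_cases hb : b = v
    · rw [ha, hb]
    · rw [Function.update_apply, Function.update_apply, if_pos ha, if_neg hb] at hab
      exact absurd hab (hclo b).ne
    · rw [Function.update_apply, Function.update_apply, if_neg ha, if_pos hb] at hab
      exact absurd hab.symm (hclo a).ne
    · rw [Function.update_apply, Function.update_apply, if_neg ha, if_neg hb] at hab
      exact hfinj hab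
  have ht2lo : {u | A v u ∧ Function.update f v c_lo u < Function.update f v c_lo v} =
      (∅ : Set V) := by
    ext u
    simp only [Set.mem_setOf_eq, Set.mem_empty_iff_false, iff_false]
    rintro ⟨_, hlt'⟩
    rw [Function.update_self] at hlt'
    by_cases hu : u = v
    · rw [hu, Function.update_self] at hlt'; exact lt_irrefl _ hlt'
    · rw [Function.update_of_ne hu] at hlt'; exact absurd hlt' (not_lt.2 (hclo u).le)
  have ht3lo : {u | A u v ∧ Function.update f v c_lo v < Function.update f v c_lo u} =
      {u | A u v ∧ u ≠ v} := by
    ext u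
    simp only [Set.mem_setOf_eq, Function.update_self]
    constructor
    · rintro ⟨h1, h2⟩
      refine ⟨h1, ?_⟩
      rintro rfl; rw [Function.update_self] at h2; exact lt_irrefl _ h2
    · rintro ⟨h1, h2⟩
      rw [Function.update_of_ne h2]
      exact ⟨h1, hclo u⟩
  have hlo := bcountAux_split A (Function.update f v c_lo) v
  rw [hs1 _ (fun u hu => Function.update_of_ne hu _ _), ht2lo, ht3lo, ← hn1,
    Set.ncard_empty] at hlo
  have hle_lo : sInf S ≤ n1 + (0 + Set.ncard {u | A u v ∧ u ≠ v}) :=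
    hlo ▸ Nat.sInf_le ⟨_, hlo_inj, rfl⟩
  -- move v to the top
  set c_hi : ℚ := (Finset.univ.sup' Finset.univ_nonempty f) + 1 with hchi_def
  have hchi : ∀ u, f u < c_hi := fun u => by
    have := Finset.le_sup' f (Finset.mem_univ u); rw [hchi_def]; linarith
  have hhi_inj : Function.Injective (Function.update f v c_hi) := by
    intro a b hab
    by_cases ha : a = v <;> by_cases hb : b = v
    · rw [ha, hb]
    · rw [Function.update_apply, Function.update_apply, if_pos ha, if_neg hb] at hab
      exact absurd hab.symm (hchi b).ne
    · rw [Function.update_apply, Function.update_apply, if_neg ha, if_pos hb] at hab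
      exact absurd hab (hchi a).ne
    · rw [Function.update_apply, Function.update_apply, if_neg ha, if_neg hb] at hab
      exact hfinj hab
  have ht2hi : {u | A v u ∧ Function.update f v c_hi u < Function.update f v c_hi v} =
      {u | A v u ∧ u ≠ v} := by
    ext u
    simp only [Set.mem_setOf_eq, Function.update_self]
    constructor
    · rintro ⟨h1, h2⟩
      refine ⟨h1, ?_⟩
      rintro rfl; rw [Function.update_self] at h2; exact lt_irrefl _ h2
    · rintro ⟨h1, h2⟩
      rw [Function.update_of_ne h2]
      exact ⟨h1, hchi u⟩
  have ht3hi : {u | A u v ∧ Function.update f v c_hi v < Function.update f v c_hi u} =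
      (∅ : Set V) := by
    ext u
    simp only [Set.mem_setOf_eq, Set.mem_empty_iff_false, iff_false]
    rintro ⟨_, hlt'⟩
    rw [Function.update_self] at hlt'
    by_cases hu : u = v
    · rw [hu, Function.update_self] at hlt'; exact lt_irrefl _ hlt'
    · rw [Function.update_of_ne hu] at hlt'; exact absurd hlt' (not_lt.2 (hchi u).le)
  have hhi := bcountAux_split A (Function.update f v c_hi) v
  rw [hs1 _ (fun u hu => Function.update_of_ne hu _ _), ht2hi, ht3hi, ← hn1,
    Set.ncard_empty] at hhi
  have hle_hi : sInf S ≤ n1 + (Set.ncard {u | A v u ∧ u ≠ v} + 0) :=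
    hhi ▸ Nat.sInf_le ⟨_, hhi_inj, rfl⟩
  -- split at f itself
  have hmain := bcountAux_split A f v
  rw [hfmin, ← hn1] at hmain
  -- put everything together
  have hsub_in : Set.ncard {u | A u v ∧ u ≠ v} ≤ Set.ncard {u | A u v} :=
    Set.ncard_le_ncard (fun u hu => hu.1) (Set.toFinite _)
  have hsub_out : Set.ncard {u | A v u ∧ u ≠ v} ≤ Set.ncard {u | A v u} :=
    Set.ncard_le_ncard (fun u hu => hu.1) (Set.toFinite _)
  have hdeg : ((backedge A (LinearOrder.lift' f hfinj)).neighborSet v).ncard ≤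
      Set.ncard {u | A v u ∧ f u < f v} + Set.ncard {u | A u v ∧ f v < f u} := by
    rw [hnb]
    calc ({u | A u v ∧ f v < f u} ∪ {u | A v u ∧ f u < f v}).ncard ≤
        Set.ncard {u | A u v ∧ f v < f u} + Set.ncard {u | A v u ∧ f u < f v} :=
          Set.ncard_union_le _ _
      _ = _ := by omega
  omega
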